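/- arXiv:2605.12238 — 3 statements merged into one kernel-verified Lean document; each statement's English description precedes it below -/
import Mathlib

section
/- Fix r > 1, a parameter a₀ ∈ ℝ, and an integer n ≥ 3 such that w_j(a₀) = f_{a₀}^j(0) ≠ 0 for 1 ≤ j ≤ n−1 and f_{a₀}^n(0) = 0, and let ω = (w_1(a₀), …, w_{n−1}(a₀)). Then the Thurston map T is differentiable at ω, and its Jacobian matrix D_ωT(ω) has entries: for 1 ≤ j ≤ n−2, the (j,1) entry is −1/f_{a₀}'(w_j(a₀)) and the (j, j+1) entry is 1/f_{a₀}'(w_j(a₀)); the (n−1, 1) entry is −1/f_{a₀}'(w_{n−1}(a₀)); and all other entries are 0. Here f_{a₀}'(x) = −r·sgn(x)·|x|^{r−1}. -/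
/-- The power-law unimodal map `f_a(x) = a - |x|^r` (with `|x|^r` a real power). -/
noncomputable def powerLawMap (a r : ℝ) : ℝ → ℝ := fun x => a - |x| ^ r

/-- The critical orbit `w_j(a) = f_a^j(0)`. -/
noncomputable def criticalOrbit (a r : ℝ) (j : ℕ) : ℝ := (powerLawMap a r)^[j] 0

/-- The derivative `f_a'(x) = -r · sgn(x) · |x|^{r-1}`. -/
noncomputable def powerLawDeriv (r : ℝ) (x : ℝ) : ℝ := -r * Real.sign x * |x| ^ (r - 1)

/-- The Thurston map `T : ℝ^m → ℝ^m` (with `m = n - 1`) associated with signs `σ`: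
`T(z)_j = σ_{j+1} (z₁ - z_{j+2})^{1/r}` for the first `m - 1` coordinates (0-based row `j`
corresponds to the mathematical index `j+1`), and `T(z)_m = σ_m z₁^{1/r}` for the last
coordinate. -/
noncomputable def thurstonMap (r : ℝ) (m : ℕ) (σ : ℕ → ℝ) (z : Fin m → ℝ) : Fin m → ℝ :=
  fun j =>
    if h : (j : ℕ) + 1 < m then
      σ ((j : ℕ) + 1) *
        (z ⟨0, Nat.lt_of_le_of_lt (Nat.zero_le _) j.isLt⟩ - z ⟨(j : ℕ) + 1, h⟩) ^ (1 / r)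
    else
      σ m * (z ⟨0, Nat.lt_of_le_of_lt (Nat.zero_le _) j.isLt⟩) ^ (1 / r)

/-- The Jacobian matrix of the Thurston map at the fixed point `ω`: in 1-based mathematical
indexing, for `1 ≤ j ≤ n-2` the `(j,1)` entry is `-1/f'(w_j)` and the `(j,j+1)` entry is
`1/f'(w_j)`; the `(n-1,1)` entry is `-1/f'(w_{n-1})`; all other entries vanish.  Here row
`j : Fin m` (0-based) corresponds to the mathematical index `j+1`, and `m = n-1`. -/
noncomputable def thurstonJacobian (a₀ r : ℝ) (m : ℕ) :
    Matrix (Fin m) (Fin m) ℝ :=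
  fun j i =>
    if (j : ℕ) + 1 < m then
      if (i : ℕ) = 0 then -1 / powerLawDeriv r (criticalOrbit a₀ r ((j : ℕ) + 1))
      else if (i : ℕ) = (j : ℕ) + 1 then 1 / powerLawDeriv r (criticalOrbit a₀ r ((j : ℕ) + 1))
      else 0
    else
      if (i : ℕ) = 0 then -1 / powerLawDeriv r (criticalOrbit a₀ r m) else 0

lemma sum_two_row {m : ℕ} (a b : ℕ) (ha : a < m) (hb : b < m) (hab : a ≠ b)
    (c d : ℝ) (z : Fin m → ℝ) :
    (∑ i : Fin m, (if (i : ℕ) = a then c else if (i : ℕ) = b then d else 0) * z i)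
      = c * z ⟨a, ha⟩ + d * z ⟨b, hb⟩ := by
  have h : ∀ i : Fin m,
      (if (i : ℕ) = a then c else if (i : ℕ) = b then d else 0) * z i
        = (if i = (⟨a, ha⟩ : Fin m) then c * z ⟨a, ha⟩ else 0)
          + (if i = (⟨b, hb⟩ : Fin m) then d * z ⟨b, hb⟩ else 0) := by
    intro i
    simp only [Fin.ext_iff]
    by_cases hia : (i : ℕ) = a <;> by_cases hib : (i : ℕ) = b
    · exact absurd (hia.symm.trans hib) hab
    · obtain rfl : i = ⟨a, ha⟩ := Fin.ext hia
      simp [hab]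
    · obtain rfl : i = ⟨b, hb⟩ := Fin.ext hib
      simp [Ne.symm hab]
    · simp [hia, hib]
  rw [Finset.sum_congr rfl (fun i _ => h i), Finset.sum_add_distrib,
    Finset.sum_ite_eq', Finset.sum_ite_eq']
  simp

lemma sum_one_row {m : ℕ} (a : ℕ) (ha : a < m) (c : ℝ) (z : Fin m → ℝ) :
    (∑ i : Fin m, (if (i : ℕ) = a then c else 0) * z i) = c * z ⟨a, ha⟩ := by
  have h : ∀ i : Fin m,
      (if (i : ℕ) = a then c else 0) * z i
        = (if i = (⟨a, ha⟩ : Fin m) then c * z ⟨a, ha⟩ else 0) := by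
    intro i
    by_cases hia : (i : ℕ) = a
    · obtain rfl : i = ⟨a, ha⟩ := Fin.ext hia
      simp
    · simp [Fin.ext_iff, hia]
  rw [Finset.sum_congr rfl (fun i _ => h i), Finset.sum_ite_eq']
  simp

lemma entry_key (r w : ℝ) (hr : 1 < r) (hw : w ≠ 0) :
    Real.sign w * ((1/r) * (|w| ^ r) ^ (1/r - 1)) = -1 / powerLawDeriv r w := by
  have habs : (0:ℝ) < |w| := abs_pos.mpr hw
  have hr0 : (0:ℝ) < r := lt_trans one_pos hr
  have h1 : (|w| ^ r) ^ (1/r - 1) = |w| ^ (1 - r) := by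
    rw [← Real.rpow_mul habs.le]
    congr 1
    field_simp
  have h2 : |w| ^ (1 - r) = (|w| ^ (r - 1))⁻¹ := by
    rw [show (1 - r) = -(r-1) by ring, Real.rpow_neg habs.le]
  have hp : (0:ℝ) < |w| ^ (r-1) := Real.rpow_pos_of_pos habs _
  rw [h1, h2, powerLawDeriv]
  rcases Real.sign_apply_eq_of_ne_zero w hw with hs | hs <;> rw [hs] <;>
    field_simp

/-- The Thurston map is (Fréchet) differentiable at `ω = (w_1(a₀), …, w_{n-1}(a₀))`, and its
Jacobian matrix there is the matrix described above. -/
theorem thurston_hasFDerivAt (r a₀ : ℝ) (hr : 1 < r) (n : ℕ) (hn : 3 ≤ n)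
    (horbit : ∀ j, 1 ≤ j → j ≤ n - 1 → criticalOrbit a₀ r j ≠ 0)
    (hper : criticalOrbit a₀ r n = 0) :
    HasFDerivAt (thurstonMap r (n - 1) (fun j => Real.sign (criticalOrbit a₀ r j)))
      (LinearMap.toContinuousLinearMap
        (Matrix.mulVecLin (thurstonJacobian a₀ r (n - 1))))
      (fun i : Fin (n - 1) => criticalOrbit a₀ r ((i : ℕ) + 1)) := by
  have hr0 : (0:ℝ) < r := lt_trans one_pos hr
  set m := n - 1 with hmdef
  have hm2 : 2 ≤ m := by omega
  have hw1 : criticalOrbit a₀ r 1 = a₀ := by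
    simp [criticalOrbit, powerLawMap, Real.zero_rpow (ne_of_gt hr0)]
  have hstep : ∀ k : ℕ, criticalOrbit a₀ r (k+1) = a₀ - |criticalOrbit a₀ r k| ^ r := by
    intro k
    simp [criticalOrbit, Function.iterate_succ_apply', powerLawMap]
  set ω : Fin m → ℝ := fun i => criticalOrbit a₀ r ((i:ℕ)+1) with hω
  rw [hasFDerivAt_pi']
  intro j
  by_cases h : (j:ℕ) + 1 < m
  · -- generic row
    set w := criticalOrbit a₀ r ((j:ℕ)+1) with hwdef
    have hwne : w ≠ 0 := horbit _ (by omega) (by omega)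
    have habs : (0:ℝ) < |w| := abs_pos.mpr hwne
    have hu0 : (0:ℝ) < |w| ^ r := Real.rpow_pos_of_pos habs r
    set i0 : Fin m := ⟨0, by omega⟩ with hi0
    set i1 : Fin m := ⟨(j:ℕ)+1, h⟩ with hi1
    have hfun : (fun z : Fin m → ℝ =>
        thurstonMap r m (fun j => Real.sign (criticalOrbit a₀ r j)) z j)
        = fun z => Real.sign w * (z i0 - z i1) ^ (1/r) := by
      funext z
      simp only [thurstonMap]
      rw [dif_pos h]
    have hval : ω i0 - ω i1 = |w| ^ r := by
      show criticalOrbit a₀ r (0+1) - criticalOrbit a₀ r (((j:ℕ)+1)+1) = |w| ^ r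
      rw [hstep ((j:ℕ)+1)]
      simp [hw1, hwdef]
    have hlin : HasFDerivAt (fun z : Fin m → ℝ => z i0 - z i1)
        ((ContinuousLinearMap.proj i0 - ContinuousLinearMap.proj i1 :
          (Fin m → ℝ) →L[ℝ] ℝ)) ω :=
      ((ContinuousLinearMap.proj i0 : (Fin m → ℝ) →L[ℝ] ℝ).hasFDerivAt).sub
        ((ContinuousLinearMap.proj i1 : (Fin m → ℝ) →L[ℝ] ℝ).hasFDerivAt)
    have hrpow : HasDerivAt (fun u : ℝ => u ^ (1/r))
        ((1/r) * (|w| ^ r) ^ (1/r - 1)) ((fun z : Fin m → ℝ => z i0 - z i1) ω) := by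
      show HasDerivAt _ _ (ω i0 - ω i1)
      rw [hval]
      exact Real.hasDerivAt_rpow_const (Or.inl hu0.ne')
    have key : HasFDerivAt (fun z : Fin m → ℝ => Real.sign w * (z i0 - z i1) ^ (1/r))
        (Real.sign w • (((1/r) * (|w| ^ r) ^ (1/r - 1)) •
          (ContinuousLinearMap.proj i0 - ContinuousLinearMap.proj i1 :
            (Fin m → ℝ) →L[ℝ] ℝ))) ω :=
      (hrpow.comp_hasFDerivAt ω hlin).const_mul _
    rw [hfun]
    refine key.congr_fderiv (Eq.symm ?_)
    ext z
    simp only [ContinuousLinearMap.coe_comp', Function.comp_apply,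
      LinearMap.coe_toContinuousLinearMap', Matrix.mulVecLin_apply,
      ContinuousLinearMap.proj_apply, ContinuousLinearMap.smul_apply,
      ContinuousLinearMap.coe_sub', Pi.sub_apply, smul_eq_mul]
    rw [show (Matrix.mulVec (thurstonJacobian a₀ r m) z) j
        = ∑ i : Fin m, thurstonJacobian a₀ r m j i * z i from rfl]
    simp only [thurstonJacobian, if_pos h]
    rw [sum_two_row 0 ((j:ℕ)+1) (by omega) h (by omega) _ _ z]
    linear_combination (z i1 - z i0) * entry_key r w hr hwne
  · -- last row
    have hj : (j:ℕ) + 1 = m := by have := j.isLt; omega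
    set w := criticalOrbit a₀ r m with hwdef
    have hwne : w ≠ 0 := horbit _ (by omega) (by omega)
    have habs : (0:ℝ) < |w| := abs_pos.mpr hwne
    have hu0 : (0:ℝ) < |w| ^ r := Real.rpow_pos_of_pos habs r
    have ha : a₀ = |w| ^ r := by
      have := hstep m
      rw [show m + 1 = n by omega, hper] at this
      linarith
    set i0 : Fin m := ⟨0, by omega⟩ with hi0
    have hfun : (fun z : Fin m → ℝ =>
        thurstonMap r m (fun j => Real.sign (criticalOrbit a₀ r j)) z j)
        = fun z => Real.sign w * (z i0) ^ (1/r) := by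
      funext z
      simp only [thurstonMap]
      rw [dif_neg h]
    have hval : ω i0 = |w| ^ r := by
      show criticalOrbit a₀ r (0+1) = |w| ^ r
      rw [hw1, ha]
    have hlin : HasFDerivAt (fun z : Fin m → ℝ => z i0)
        ((ContinuousLinearMap.proj i0 : (Fin m → ℝ) →L[ℝ] ℝ)) ω :=
      (ContinuousLinearMap.proj i0 : (Fin m → ℝ) →L[ℝ] ℝ).hasFDerivAt
    have hrpow : HasDerivAt (fun u : ℝ => u ^ (1/r))
        ((1/r) * (|w| ^ r) ^ (1/r - 1)) ((fun z : Fin m → ℝ => z i0) ω) := by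
      show HasDerivAt _ _ (ω i0)
      rw [hval]
      exact Real.hasDerivAt_rpow_const (Or.inl hu0.ne')
    have key : HasFDerivAt (fun z : Fin m → ℝ => Real.sign w * (z i0) ^ (1/r))
        (Real.sign w • (((1/r) * (|w| ^ r) ^ (1/r - 1)) •
          (ContinuousLinearMap.proj i0 : (Fin m → ℝ) →L[ℝ] ℝ))) ω :=
      (hrpow.comp_hasFDerivAt ω hlin).const_mul _
    rw [hfun]
    refine key.congr_fderiv (Eq.symm ?_)
    ext z
    simp only [ContinuousLinearMap.coe_comp', Function.comp_apply,
      LinearMap.coe_toContinuousLinearMap', Matrix.mulVecLin_apply,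
      ContinuousLinearMap.proj_apply, ContinuousLinearMap.smul_apply, smul_eq_mul]
    rw [show (Matrix.mulVec (thurstonJacobian a₀ r m) z) j
        = ∑ i : Fin m, thurstonJacobian a₀ r m j i * z i from rfl]
    simp only [thurstonJacobian, if_neg h]
    rw [sum_one_row 0 (by omega) _ z]
    linear_combination (-(z i0)) * entry_key r w hr hwne
end

section
/- Let m ≥ 1 and let d₁, …, d_m be nonzero real numbers. Define the m × m real matrix M by: for 1 ≤ j ≤ m−1, the (j,1) entry of M is −1/d_j and the (j, j+1) entry is 1/d_j; the (m,1) entry is −1/d_m; and all other entries are 0. Then det(I_m − M) = Σ_{k=0}^{m} Π_{j=1}^{k} (1/d_j), where the empty product (k = 0) equals 1. -/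
private lemma sum_two_aux {m : ℕ} (p q : Fin m) (hpq : p ≠ q) (X Y : ℝ) :
    (∑ k : Fin m, if k = p then X else if k = q then Y else 0) = X + Y := by
  have h : ∀ k : Fin m, (if k = p then X else if k = q then Y else 0)
      = (if k = p then X else 0) + (if k = q then Y else 0) := by
    intro k
    by_cases h1 : k = p
    · subst h1; simp [hpq]
    · by_cases h2 : k = q <;> simp [h1, h2, Ne.symm hpq]
  rw [Finset.sum_congr rfl (fun k _ => h k), Finset.sum_add_distrib]
  simp


/-- The Thurston-type matrix built from nonzero numbers `d_1, …, d_m` (here `d j` for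
`j : ℕ`, `1 ≤ j ≤ m`, with 0-based row `j : Fin m` corresponding to the mathematical
index `j+1`): in 1-based indexing, for `1 ≤ j ≤ m-1` the `(j,1)` entry is `-1/d_j` and
the `(j,j+1)` entry is `1/d_j`; the `(m,1)` entry is `-1/d_m`; all other entries are 0. -/
noncomputable def thurstonTypeMatrix (m : ℕ) (d : ℕ → ℝ) : Matrix (Fin m) (Fin m) ℝ :=
  fun j i =>
    if (j : ℕ) + 1 < m then
      if (i : ℕ) = 0 then -1 / d ((j : ℕ) + 1)
      else if (i : ℕ) = (j : ℕ) + 1 then 1 / d ((j : ℕ) + 1)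
      else 0
    else
      if (i : ℕ) = 0 then -1 / d m else 0

/-- For `m ≥ 1` and nonzero `d_1, …, d_m`, the matrix `M` above satisfies
`det(I_m - M) = Σ_{k=0}^{m} Π_{j=1}^{k} (1/d_j)` (the `k = 0` term being the empty
product `1`). -/
theorem det_one_sub_thurstonTypeMatrix (m : ℕ) (hm : 1 ≤ m) (d : ℕ → ℝ)
    (hd : ∀ j, 1 ≤ j → j ≤ m → d j ≠ 0) :
    Matrix.det ((1 : Matrix (Fin m) (Fin m) ℝ) - thurstonTypeMatrix m d) =
      ∑ k ∈ Finset.range (m + 1), ∏ j ∈ Finset.Icc 1 k, (1 / d j) := by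
  clear hd
  obtain ⟨n, rfl⟩ : ∃ n, m = n + 1 := ⟨m - 1, by omega⟩
  clear hm
  set S : ℕ → ℝ := fun i => ∑ k ∈ Finset.Icc i (n+1), ∏ j ∈ Finset.Icc i k, (1 / d j)
    with hS_def
  have hS : ∀ i, i ≤ n + 1 → S i = (1 / d i) * (1 + S (i + 1)) := by
    intro i hi
    have hins : Finset.Icc i (n+1) = insert i (Finset.Icc (i+1) (n+1)) := by
      ext x; simp only [Finset.mem_Icc, Finset.mem_insert]; omega
    have hnot : i ∉ Finset.Icc (i+1) (n+1) := by simp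
    have h2 : ∀ k ∈ Finset.Icc (i+1) (n+1), (∏ j ∈ Finset.Icc i k, (1/d j))
        = (1/d i) * ∏ j ∈ Finset.Icc (i+1) k, (1/d j) := by
      intro k hk
      simp only [Finset.mem_Icc] at hk
      have : Finset.Icc i k = insert i (Finset.Icc (i+1) k) := by
        ext x; simp only [Finset.mem_Icc, Finset.mem_insert]; omega
      rw [this, Finset.prod_insert (by simp)]
    simp only [hS_def]
    rw [hins, Finset.sum_insert hnot, Finset.sum_congr rfl h2, ← Finset.mul_sum]
    simp [Finset.Icc_self]
    ring
  have hStop : S (n+2) = 0 := by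
    simp only [hS_def]
    rw [Finset.Icc_eq_empty (by omega), Finset.sum_empty]
  have hSm : S (n+1) = 1 / d (n+1) := by
    rw [hS (n+1) le_rfl, hStop]; ring
  set v : Fin (n+1) → ℝ := fun k => if (k:ℕ) = 0 then 1 else -S ((k:ℕ)+1) with hv_def
  set E : Matrix (Fin (n+1)) (Fin (n+1)) ℝ :=
    fun i k => if (k:ℕ) = 0 then v i else if i = k then 1 else 0 with hE_def
  have hElow : E.BlockTriangular OrderDual.toDual := by
    intro i k hik
    have hik' : i < k := hik
    simp only [hE_def]
    rw [if_neg (by omega), if_neg (by exact fun h => absurd h (ne_of_lt hik'))]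
  have hdetE : E.det = 1 := by
    rw [Matrix.det_of_lowerTriangular E hElow]
    apply Finset.prod_eq_one
    intro i _
    simp only [hE_def, hv_def]
    by_cases h0 : (i:ℕ) = 0 <;> simp [h0]
  set A : Matrix (Fin (n+1)) (Fin (n+1)) ℝ :=
    (1 : Matrix (Fin (n+1)) (Fin (n+1)) ℝ) - thurstonTypeMatrix (n+1) d with hA_def
  set B := A * E with hB_def
  -- column 0 of B
  have hB0 : ∀ j : Fin (n+1), B j 0 = if (j:ℕ) = 0 then 1 + S 1 else 0 := by
    intro j
    have hcol : ∀ k : Fin (n+1), E k 0 = v k := by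
      intro k; simp [hE_def]
    have hsplit : B j 0 = v j - ∑ k : Fin (n+1), thurstonTypeMatrix (n+1) d j k * v k := by
      rw [hB_def, Matrix.mul_apply]
      simp only [hA_def, Matrix.sub_apply, Matrix.one_apply, hcol, sub_mul]
      rw [Finset.sum_sub_distrib]
      congr 1
      have hpt : ∀ k : Fin (n+1), (if j = k then (1:ℝ) else 0) * v k
          = if j = k then v k else 0 := fun k => by by_cases h : j = k <;> simp [h]
      rw [Finset.sum_congr rfl (fun k _ => hpt k), Finset.sum_ite_eq Finset.univ j v]
      simp
    by_cases hj : (j:ℕ) + 1 < n + 1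
    · have hMsum : ∑ k : Fin (n+1), thurstonTypeMatrix (n+1) d j k * v k
          = (-1/d ((j:ℕ)+1)) * 1 + (1/d ((j:ℕ)+1)) * (-S ((j:ℕ)+2)) := by
        have heach : ∀ k : Fin (n+1), thurstonTypeMatrix (n+1) d j k * v k
            = if k = (0 : Fin (n+1)) then (-1/d ((j:ℕ)+1)) * 1
              else if k = (⟨(j:ℕ)+1, hj⟩ : Fin (n+1)) then (1/d ((j:ℕ)+1)) * (-S ((j:ℕ)+2))
              else 0 := by
          intro k
          simp only [thurstonTypeMatrix, if_pos hj, hv_def, Fin.ext_iff]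
          by_cases h0 : (k:ℕ) = 0
          · simp [h0]
          · by_cases h1 : (k:ℕ) = (j:ℕ) + 1 <;> simp [h0, h1]
        rw [Finset.sum_congr rfl (fun k _ => heach k)]
        exact sum_two_aux _ _ (Fin.ne_of_val_ne (Nat.succ_ne_zero _).symm) _ _
      rw [hsplit, hMsum]
      by_cases h0 : (j:ℕ) = 0
      · rw [if_pos h0]
        simp only [hv_def, if_pos h0, h0]
        norm_num
        rw [hS 1 (by omega)]
        ring
      · rw [if_neg h0]
        simp only [hv_def, if_neg h0]
        rw [hS ((j:ℕ)+1) (by omega)]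
        ring
    · have hjn : (j:ℕ) = n := by omega
      have hMsum : ∑ k : Fin (n+1), thurstonTypeMatrix (n+1) d j k * v k
          = (-1/d (n+1)) * 1 := by
        have heach : ∀ k : Fin (n+1), thurstonTypeMatrix (n+1) d j k * v k
            = if k = (0 : Fin (n+1)) then (-1/d (n+1)) * 1 else 0 := by
          intro k
          simp only [thurstonTypeMatrix, if_neg hj, hv_def, Fin.ext_iff]
          by_cases h0 : (k:ℕ) = 0 <;> simp [h0]
        rw [Finset.sum_congr rfl (fun k _ => heach k)]
        simp
      rw [hsplit, hMsum]
      by_cases h0 : (j:ℕ) = 0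
      · have hn0 : n = 0 := by omega
        rw [if_pos h0]
        simp only [hv_def, if_pos h0]
        rw [hn0] at hSm ⊢
        rw [hSm]; ring
      · rw [if_neg h0]
        simp only [hv_def, if_neg h0, hjn]
        rw [hSm]; ring
  -- entries of B at nonzero columns agree with A
  have hBother : ∀ (j i : Fin (n+1)), (i:ℕ) ≠ 0 → B j i = A j i := by
    intro j i hi
    rw [hB_def, Matrix.mul_apply]
    have : ∀ k : Fin (n+1), A j k * E k i = if k = i then A j k else 0 := by
      intro k
      simp only [hE_def, if_neg hi]
      by_cases h : k = i
      · subst h; simp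
      · simp [h, fun hh : i = k => h hh.symm]
    rw [Finset.sum_congr rfl (fun k _ => this k),
      Finset.sum_ite_eq' Finset.univ i (fun k => A j k)]
    simp
  have hAval : ∀ (j i : Fin (n+1)), (i:ℕ) ≠ 0 → (i:ℕ) ≠ (j:ℕ) + 1 → i ≠ j → A j i = 0 := by
    intro j i hi0 hi1 hij
    simp only [hA_def, Matrix.sub_apply, Matrix.one_apply, if_neg (fun h : j = i => hij h.symm),
      thurstonTypeMatrix]
    by_cases h : (j:ℕ) + 1 < n + 1 <;> simp [h, hi0, hi1]
  have hBupper : B.BlockTriangular id := by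
    intro j i hij
    have hij' : (i:ℕ) < (j:ℕ) := hij
    by_cases hi : (i:ℕ) = 0
    · have : i = 0 := Fin.ext hi
      subst this
      rw [hB0 j, if_neg (by omega)]
    · rw [hBother j i hi]
      exact hAval j i hi (by omega) (by simp [Fin.ext_iff]; omega)
  have hBdiag : ∀ j : Fin (n+1), (j:ℕ) ≠ 0 → B j j = 1 := by
    intro j hj
    rw [hBother j j hj]
    simp only [hA_def, Matrix.sub_apply, Matrix.one_apply_eq, thurstonTypeMatrix]
    by_cases h : (j:ℕ) + 1 < n + 1 <;> simp [h, hj] <;> omega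
  have hrange : Finset.range (n + 1 + 1) = insert 0 (Finset.Icc 1 (n+1)) := by
    ext x; simp only [Finset.mem_range, Finset.mem_insert, Finset.mem_Icc]; omega
  have htarget : ∑ k ∈ Finset.range (n + 1 + 1), ∏ j ∈ Finset.Icc 1 k, (1 / d j)
      = 1 + S 1 := by
    rw [hrange, Finset.sum_insert (by simp)]
    simp [hS_def]
  rw [htarget]
  calc A.det = B.det := by rw [hB_def, Matrix.det_mul, hdetE, mul_one]
    _ = ∏ j : Fin (n+1), B j j := Matrix.det_of_upperTriangular hBupper
    _ = B 0 0 := by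
        apply Finset.prod_eq_single_of_mem (0 : Fin (n+1)) (Finset.mem_univ _)
        intro b _ hb
        exact hBdiag b (fun h => hb (Fin.ext h))
    _ = 1 + S 1 := by rw [hB0 0]; norm_num
end

section
/- Fix r > 1, a parameter a₀ ∈ ℝ, and an integer n ≥ 2 such that w_j(a₀) = f_{a₀}^j(0) ≠ 0 for 1 ≤ j ≤ n−1. Let M be the (n−1) × (n−1) real matrix with entries: for 1 ≤ j ≤ n−2, the (j,1) entry is −1/f_{a₀}'(w_j(a₀)) and the (j, j+1) entry is 1/f_{a₀}'(w_j(a₀)); the (n−1,1) entry is −1/f_{a₀}'(w_{n−1}(a₀)); all other entries are 0. Then det(I_{n−1} − M) · (f_{a₀}^{n−1})'(f_{a₀}(0)) equals the derivative at a₀ of the function a ↦ f_a^n(0), where (f_{a₀}^{n−1})'(f_{a₀}(0)) = Π_{j=1}^{n−1} f_{a₀}'(w_j(a₀)). -/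
lemma myAbsRpowDeriv {r : ℝ} {x : ℝ} (hx : x ≠ 0) :
    HasDerivAt (fun y : ℝ => |y| ^ r) (r * Real.sign x * |x| ^ (r - 1)) x := by
  rcases hx.lt_or_gt with h | h
  · have h1 : HasDerivAt (fun y : ℝ => (-y) ^ r) (r * (-x) ^ (r - 1) * (-1)) x :=
      (Real.hasDerivAt_rpow_const (x := -x) (p := r) (Or.inl (by linarith))).comp x
        (hasDerivAt_neg x)
    have h2 : (fun y : ℝ => (-y) ^ r) =ᶠ[nhds x] fun y : ℝ => |y| ^ r := by
      filter_upwards [Iio_mem_nhds h] with y hy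
      rw [abs_of_neg hy]
    have := h1.congr_of_eventuallyEq h2.symm
    convert this using 1
    any_goals rfl
    rw [Real.sign_of_neg h, abs_of_neg h]; ring
  · have h1 : HasDerivAt (fun y : ℝ => y ^ r) (r * x ^ (r - 1)) x :=
      Real.hasDerivAt_rpow_const (Or.inl h.ne')
    have h2 : (fun y : ℝ => y ^ r) =ᶠ[nhds x] fun y : ℝ => |y| ^ r := by
      filter_upwards [Ioi_mem_nhds h] with y hy
      rw [abs_of_pos hy]
    have := h1.congr_of_eventuallyEq h2.symm
    convert this using 1
    any_goals rfl
    rw [Real.sign_of_pos h, abs_of_pos h]; ring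

lemma myOrbitDeriv (r a₀ : ℝ) (hr : 1 < r) (N : ℕ) (hN : 1 ≤ N)
    (h : ∀ j, 1 ≤ j → j ≤ N - 1 → criticalOrbit a₀ r j ≠ 0) :
    HasDerivAt (fun a => (powerLawMap a r)^[N] 0)
      (∑ k ∈ Finset.Icc 1 N, ∏ j ∈ Finset.Icc k (N - 1),
        powerLawDeriv r (criticalOrbit a₀ r j)) a₀ := by
  induction N, hN using Nat.le_induction with
  | base =>
    have : (fun a : ℝ => (powerLawMap a r)^[1] 0) = fun a => a - 0 := by
      funext a
      simp [powerLawMap, Real.zero_rpow (by positivity : r ≠ 0)]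
    rw [this]
    have hs : (∑ k ∈ Finset.Icc 1 1, ∏ j ∈ Finset.Icc k (1 - 1),
        powerLawDeriv r (criticalOrbit a₀ r j)) = 1 := by
      simp
    rw [hs]
    simpa using (hasDerivAt_id a₀).sub_const 0
  | succ N hN1 ih =>
    have h' : ∀ j, 1 ≤ j → j ≤ N - 1 → criticalOrbit a₀ r j ≠ 0 := by
      intro j h1 h2; exact h j h1 (by omega)
    have ihD := ih h'
    have hw : criticalOrbit a₀ r N ≠ 0 := h N hN1 (by omega)
    set D := ∑ k ∈ Finset.Icc 1 N, ∏ j ∈ Finset.Icc k (N - 1),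
        powerLawDeriv r (criticalOrbit a₀ r j) with hD
    have hfun : (fun a : ℝ => (powerLawMap a r)^[N + 1] 0)
        = fun a => a - |(powerLawMap a r)^[N] 0| ^ r := by
      funext a
      rw [Function.iterate_succ_apply']
      rfl
    have habs : HasDerivAt (fun a : ℝ => |(powerLawMap a r)^[N] 0| ^ r)
        ((r * Real.sign (criticalOrbit a₀ r N) * |criticalOrbit a₀ r N| ^ (r - 1)) * D) a₀ := by
      exact (myAbsRpowDeriv hw).comp a₀ ihD
    have hmain : HasDerivAt (fun a : ℝ => (powerLawMap a r)^[N + 1] 0)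
        (1 + powerLawDeriv r (criticalOrbit a₀ r N) * D) a₀ := by
      rw [hfun]
      have := (hasDerivAt_id a₀).sub habs
      convert this using 1
      any_goals rfl
      simp [powerLawDeriv]; ring
    convert hmain using 1
    obtain ⟨P, rfl⟩ : ∃ P, N = P + 1 := ⟨N - 1, by omega⟩
    rw [Finset.sum_Icc_succ_top (by omega : 1 ≤ P + 1 + 1)]
    simp only [Nat.add_sub_cancel]
    rw [Finset.mul_sum]
    rw [show Finset.Icc (P + 1 + 1) (P + 1) = ∅ from Finset.Icc_eq_empty (by omega)]
    rw [Finset.prod_empty, add_comm]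
    congr 1
    apply Finset.sum_congr rfl
    intro k hk
    rw [Finset.mem_Icc] at hk
    rw [Finset.prod_Icc_succ_top (by omega : k ≤ P + 1)]
    simp only [Nat.add_sub_cancel]
    ring

open Matrix in
lemma myDetGeneral (d : ℕ → ℝ) (m : ℕ) (hm : 1 ≤ m)
    (M : Matrix (Fin m) (Fin m) ℝ)
    (hM : ∀ j i : Fin m, M j i =
      (if (i : ℕ) = 0 then -(d ((j : ℕ) + 1))⁻¹ else 0)
      + (if (i : ℕ) = (j : ℕ) + 1 then (d ((j : ℕ) + 1))⁻¹ else 0)) :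
    Matrix.det (1 - M) = 1 + ∑ i ∈ Finset.Icc 1 m, ∏ k ∈ Finset.Icc 1 i, (d k)⁻¹ := by
  set g : ℕ → ℝ := fun k => (d k)⁻¹ with hg
  set N : Matrix (Fin m) (Fin m) ℝ :=
    Matrix.of (fun j i => if (i : ℕ) = (j : ℕ) + 1 then g ((j : ℕ) + 1) else 0) with hN
  set c : Fin m → ℝ := fun j => -g ((j : ℕ) + 1) with hc
  set v : Fin m → ℝ := fun i => if (i : ℕ) = 0 then 1 else 0 with hv
  set w : Fin m → ℝ :=
    fun j => -∑ i ∈ Finset.Icc ((j : ℕ) + 1) m, ∏ k ∈ Finset.Icc ((j : ℕ) + 1) i, g k with hw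
  have hMeq : M = Matrix.replicateCol Unit c * Matrix.replicateRow Unit v + N := by
    funext j i
    rw [hM]
    simp only [Matrix.add_apply, Matrix.mul_apply, Finset.univ_unique, Finset.sum_singleton,
      Matrix.replicateCol_apply, Matrix.replicateRow_apply, hN, Matrix.of_apply]
    by_cases hi0 : (i : ℕ) = 0 <;> simp [hi0, hc, hv, hg, mul_comm]
  have hsolve : (1 - N) *ᵥ w = c := by
    funext j
    have hNw : (N *ᵥ w) j = if h : (j : ℕ) + 1 < m then g ((j : ℕ) + 1) * w ⟨(j : ℕ) + 1, h⟩
        else 0 := by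
      simp only [Matrix.mulVec, dotProduct, hN, Matrix.of_apply, ite_mul, zero_mul]
      split
      · next h =>
        rw [Finset.sum_eq_single (⟨(j : ℕ) + 1, h⟩ : Fin m)]
        · simp
        · intro b _ hb
          rw [if_neg]
          intro hbc
          exact hb (Fin.ext hbc)
        · simp
      · next h =>
        apply Finset.sum_eq_zero
        intro k _
        rw [if_neg]
        intro hk
        exact h (hk ▸ k.isLt)
    rw [Matrix.sub_mulVec, Matrix.one_mulVec, Pi.sub_apply, hNw]
    split
    · next h =>
      simp only [hw, hc]
      have hins : ∀ b : ℕ, (j : ℕ) + 1 ≤ b →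
          ∏ k ∈ Finset.Icc ((j : ℕ) + 1) b, g k
            = g ((j : ℕ) + 1) * ∏ k ∈ Finset.Icc ((j : ℕ) + 1 + 1) b, g k := by
        intro b hb
        rw [← Finset.Ioc_insert_left hb, Finset.prod_insert Finset.left_notMem_Ioc,
          Finset.Icc_add_one_left_eq_Ioc]
      rw [← Finset.Ioc_insert_left (by omega : (j : ℕ) + 1 ≤ m),
        Finset.sum_insert Finset.left_notMem_Ioc, Finset.Icc_self, Finset.prod_singleton,
        ← Finset.Icc_add_one_left_eq_Ioc]
      rw [Finset.sum_congr rfl (fun b hb => hins b (by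
        rw [Finset.mem_Icc] at hb; omega))]
      rw [← Finset.mul_sum]
      ring
    · next h =>
      have hjm : (j : ℕ) + 1 = m := by have := j.isLt; omega
      simp only [hw, hc, hjm, Finset.Icc_self, Finset.sum_singleton, Finset.prod_singleton]
      ring
  have hkey : Matrix.replicateCol Unit c * Matrix.replicateRow Unit v
      = (1 - N) * (Matrix.replicateCol Unit w * Matrix.replicateRow Unit v) := by
    rw [← Matrix.mul_assoc, ← Matrix.replicateCol_mulVec, hsolve]
  have hfac : 1 - M = (1 - N) * (1 - Matrix.replicateCol Unit w * Matrix.replicateRow Unit v) := by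
    rw [Matrix.mul_sub, Matrix.mul_one, ← hkey, hMeq]
    abel
  have hdetN : (1 - N).det = 1 := by
    rw [Matrix.det_of_upperTriangular]
    · apply Finset.prod_eq_one
      intro i _
      simp [hN, Matrix.one_apply]
    · intro i j hij
      have hij' : (j : ℕ) < (i : ℕ) := hij
      have h1 : (j : ℕ) ≠ (i : ℕ) + 1 := by omega
      have h3 : i ≠ j := ne_of_gt hij
      simp [hN, Matrix.one_apply, h1, h3]
  have hcolneg : Matrix.replicateCol Unit (-w) = -Matrix.replicateCol Unit w := by
    funext a b; simp [Matrix.replicateCol_apply]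
  have hdetR : (1 - Matrix.replicateCol Unit w * Matrix.replicateRow Unit v).det = 1 - w ⟨0, hm⟩ := by
    have h1 : (1 : Matrix (Fin m) (Fin m) ℝ) - Matrix.replicateCol Unit w * Matrix.replicateRow Unit v
        = 1 + Matrix.replicateCol Unit (-w) * Matrix.replicateRow Unit v := by
      rw [hcolneg, Matrix.neg_mul, sub_eq_add_neg]
    rw [h1, Matrix.det_one_add_replicateCol_mul_replicateRow]
    congr 1
    simp only [dotProduct, Pi.neg_apply, hv]
    rw [Finset.sum_eq_single (⟨0, hm⟩ : Fin m)]
    · simp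
    · intro b _ hb
      rw [if_neg, zero_mul]
      intro hb0
      exact hb (Fin.ext hb0)
    · simp
  rw [hfac, Matrix.det_mul, hdetN, hdetR, one_mul, hw]
  simp [sub_neg_eq_add]

lemma myMulSum (d : ℕ → ℝ) (m : ℕ) (hm : 1 ≤ m) (hd : ∀ j, 1 ≤ j → j ≤ m → d j ≠ 0) :
    (1 + ∑ i ∈ Finset.Icc 1 m, ∏ k ∈ Finset.Icc 1 i, (d k)⁻¹) * ∏ j ∈ Finset.Icc 1 m, d j
      = ∑ k ∈ Finset.Icc 1 (m + 1), ∏ j ∈ Finset.Icc k m, d j := by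
  rw [add_mul, one_mul, Finset.sum_mul]
  have hterm : ∀ i ∈ Finset.Icc 1 m,
      (∏ k ∈ Finset.Icc 1 i, (d k)⁻¹) * ∏ j ∈ Finset.Icc 1 m, d j
        = ∏ j ∈ Finset.Icc (i + 1) m, d j := by
    intro i hi
    rw [Finset.mem_Icc] at hi
    have hsplit : (∏ j ∈ Finset.Icc 1 i, d j) * ∏ j ∈ Finset.Icc (i + 1) m, d j
        = ∏ j ∈ Finset.Icc 1 m, d j := by
      rw [Finset.Icc_add_one_left_eq_Ioc, show (1 : ℕ) = 0 + 1 from rfl, Finset.Icc_add_one_left_eq_Ioc,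
        Finset.Icc_add_one_left_eq_Ioc]
      exact Finset.prod_Ioc_consecutive d (Nat.zero_le i) hi.2
    have hone : (∏ k ∈ Finset.Icc 1 i, (d k)⁻¹) * ∏ j ∈ Finset.Icc 1 i, d j = 1 := by
      rw [← Finset.prod_mul_distrib]
      apply Finset.prod_eq_one
      intro k hk
      rw [Finset.mem_Icc] at hk
      exact inv_mul_cancel₀ (hd k hk.1 (le_trans hk.2 hi.2))
    rw [← hsplit, ← mul_assoc, hone, one_mul]
  rw [Finset.sum_congr rfl hterm]
  rw [← Finset.Ioc_insert_left (by omega : 1 ≤ m + 1),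
    Finset.sum_insert Finset.left_notMem_Ioc, ← Finset.Icc_add_one_left_eq_Ioc,
    ← Finset.map_add_right_Icc 1 m 1, Finset.sum_map]
  simp only [addRightEmbedding_apply]

/-- The determinant identity: `det(I_{n-1} - M) · (f_{a₀}^{n-1})'(f_{a₀}(0))` equals the
derivative at `a₀` of `a ↦ f_a^n(0)`, where
`(f_{a₀}^{n-1})'(f_{a₀}(0)) = Π_{j=1}^{n-1} f_{a₀}'(w_j(a₀))`. -/
theorem det_identity_parameter_derivative (r a₀ : ℝ) (hr : 1 < r) (n : ℕ) (hn : 2 ≤ n)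
    (horbit : ∀ j, 1 ≤ j → j ≤ n - 1 → criticalOrbit a₀ r j ≠ 0) :
    HasDerivAt (fun a => (powerLawMap a r)^[n] 0)
      (Matrix.det ((1 : Matrix (Fin (n - 1)) (Fin (n - 1)) ℝ) - thurstonJacobian a₀ r (n - 1)) *
        ∏ j ∈ Finset.Icc 1 (n - 1), powerLawDeriv r (criticalOrbit a₀ r j)) a₀ := by
  obtain ⟨m, rfl⟩ : ∃ m, n = m + 1 := ⟨n - 1, by omega⟩
  have hm : 1 ≤ m := by omega
  simp only [Nat.add_sub_cancel] at horbit ⊢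
  set d : ℕ → ℝ := fun j => powerLawDeriv r (criticalOrbit a₀ r j) with hdDef
  have hd : ∀ j, 1 ≤ j → j ≤ m → d j ≠ 0 := by
    intro j h1 h2
    have hx := horbit j h1 h2
    simp only [hdDef, powerLawDeriv]
    apply mul_ne_zero (mul_ne_zero _ _) _
    · exact neg_ne_zero.2 (by positivity)
    · exact fun h => hx (Real.sign_eq_zero_iff.1 h)
    · exact (Real.rpow_pos_of_pos (abs_pos.2 hx) _).ne'
  have hMent : ∀ j i : Fin m, thurstonJacobian a₀ r m j i =
      (if (i : ℕ) = 0 then -(d ((j : ℕ) + 1))⁻¹ else 0)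
      + (if (i : ℕ) = (j : ℕ) + 1 then (d ((j : ℕ) + 1))⁻¹ else 0) := by
    intro j i
    show (if (j : ℕ) + 1 < m then _ else _) = _
    by_cases hjm : (j : ℕ) + 1 < m
    · rw [if_pos hjm]
      by_cases hi0 : (i : ℕ) = 0
      · have hne : (i : ℕ) ≠ (j : ℕ) + 1 := by omega
        simp [hi0, hne, one_div, hdDef, neg_div]
      · by_cases hij : (i : ℕ) = (j : ℕ) + 1 <;> simp [hi0, hij, one_div, hdDef]
    · rw [if_neg hjm]
      have hjm' : (j : ℕ) + 1 = m := by have := j.isLt; omega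
      have hij : (i : ℕ) ≠ (j : ℕ) + 1 := by have := i.isLt; omega
      have hijm : ¬(i : ℕ) = m := by omega
      have h0m : ¬(0 : ℕ) = m := by omega
      by_cases hi0 : (i : ℕ) = 0 <;>
        simp [hi0, hij, one_div, hdDef, hjm', neg_div, hijm, h0m]
  have hcast : ((1 : Matrix (Fin (m + 1 - 1)) (Fin (m + 1 - 1)) ℝ)
      - thurstonJacobian a₀ r (m + 1 - 1)).det
      = ((1 : Matrix (Fin m) (Fin m) ℝ) - thurstonJacobian a₀ r m).det := rfl
  rw [hcast, myDetGeneral d m hm (thurstonJacobian a₀ r m) hMent, myMulSum d m hm hd]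
  have := myOrbitDeriv r a₀ hr (m + 1) (by omega) (by simpa using horbit)
  simpa using this
end
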